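/- arXiv:2104.02354 — 3 statements merged into one kernel-verified Lean document; each statement's English description precedes it below -/
import Mathlib

section
/- The adjoints of the pseudo-fermionic Pauli operators also satisfy the Pauli relations: let a, b be 2×2 complex matrices with a·b + b·a = 1 and a² = b² = 0, set μ₁ = b + a, μ₂ = i·(b − a), μ₃ = a·b − b·a, and let ρⱼ = μⱼᴴ be the conjugate transpose of μⱼ (j = 1, 2, 3). Then ρ₁² = ρ₂² = ρ₃² = 1, ρ₁·ρ₂ = i·ρ₃, ρ₂·ρ₃ = i·ρ₁, and ρ₃·ρ₁ = i·ρ₂. -/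
open Matrix

private lemma pf_aux (A B : Matrix (Fin 2) (Fin 2) ℂ)
    (h : B * A + A * B = 1) (hA : A * A = 0) (hB : B * B = 0) :
    (B + A) ^ 2 = 1 ∧
    ((-Complex.I) • (B - A)) ^ 2 = 1 ∧
    (B * A - A * B) ^ 2 = 1 ∧
    (B + A) * ((-Complex.I) • (B - A)) = Complex.I • (B * A - A * B) ∧
    ((-Complex.I) • (B - A)) * (B * A - A * B) = Complex.I • (B + A) ∧
    (B * A - A * B) * (B + A) = Complex.I • ((-Complex.I) • (B - A)) := by
  have hABA : A * B * A = A := by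
    have e : A * B * A = (B * A + A * B) * A - B * (A * A) := by noncomm_ring
    rw [e, h, hA]; simp
  have hBAB : B * A * B = B := by
    have e : B * A * B = (B * A + A * B) * B - A * (B * B) := by noncomm_ring
    rw [e, h, hB]; simp
  refine ⟨?_, ?_, ?_, ?_, ?_, ?_⟩
  · have e : (B + A) ^ 2 = (B * A + A * B) + (A * A + B * B) := by noncomm_ring
    rw [e, h, hA, hB]; simp
  · have e : ((-Complex.I) • (B - A)) ^ 2
        = ((-Complex.I) ^ 2) • ((A * A + B * B) - (B * A + A * B)) := by
      rw [smul_pow]; congr 1; noncomm_ring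
    rw [e, h, hA, hB]
    simp [neg_pow, Complex.I_sq]
  · have e : (B * A - A * B) ^ 2
        = (B * A * B * A + A * B * A * B) - (B * (A * A) * B + A * (B * B) * A) := by
      noncomm_ring
    rw [e, hA, hB, hBAB, hABA, h]; simp
  · have e : (B + A) * ((-Complex.I) • (B - A))
        = (-Complex.I) • ((B * B - A * A) - (B * A - A * B)) := by
      rw [mul_smul_comm]; congr 1; noncomm_ring
    rw [e, hA, hB]
    rw [sub_zero, zero_sub, smul_neg, neg_smul, neg_neg]
  · have e : ((-Complex.I) • (B - A)) * (B * A - A * B)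
        = (-Complex.I) • ((B * (B * A) + A * (A * B)) - (B * A * B + A * B * A)) := by
      rw [smul_mul_assoc]; congr 1; noncomm_ring
    rw [e, hBAB, hABA]
    have : B * (B * A) = 0 := by rw [← mul_assoc, hB]; simp
    have h2 : A * (A * B) = 0 := by rw [← mul_assoc, hA]; simp
    rw [this, h2]; simp [add_comm]
  · have e : (B * A - A * B) * (B + A)
        = (B * A * B - A * B * A) + (B * (A * A) - A * (B * B)) := by noncomm_ring
    rw [e, hA, hB, hBAB, hABA]
    rw [smul_smul]; simp

/-- the conjugate transposes of the pseudo-fermionic Pauli operators also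
satisfy the Pauli relations. -/
theorem pseudo_fermions_adjoint_pauli_relations
    (a b : Matrix (Fin 2) (Fin 2) ℂ)
    (hab : a * b + b * a = 1) (ha : a ^ 2 = 0) (hb : b ^ 2 = 0) :
    ((b + a)ᴴ) ^ 2 = 1 ∧
    ((Complex.I • (b - a))ᴴ) ^ 2 = 1 ∧
    ((a * b - b * a)ᴴ) ^ 2 = 1 ∧
    (b + a)ᴴ * (Complex.I • (b - a))ᴴ = Complex.I • (a * b - b * a)ᴴ ∧
    (Complex.I • (b - a))ᴴ * (a * b - b * a)ᴴ = Complex.I • (b + a)ᴴ ∧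
    (a * b - b * a)ᴴ * (b + a)ᴴ = Complex.I • (Complex.I • (b - a))ᴴ := by
  have h1 : bᴴ * aᴴ + aᴴ * bᴴ = 1 := by
    have := congrArg conjTranspose hab
    simpa using this
  have hA : aᴴ * aᴴ = 0 := by
    have := congrArg conjTranspose ha
    simpa [sq] using this
  have hB : bᴴ * bᴴ = 0 := by
    have := congrArg conjTranspose hb
    simpa [sq] using this
  obtain ⟨g1, g2, g3, g4, g5, g6⟩ := pf_aux aᴴ bᴴ h1 hA hB
  refine ⟨by simpa using g1, by simpa using g2, by simpa using g3,
    by simpa using g4, by simpa using g5, by simpa using g6⟩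
end

section
/- The two-level-atom model is pseudo-fermionic: let δ ∈ ℝ and ω ∈ ℂ with ω ≠ 0 and |ω| > |δ|, set Ω = √(|ω|² − δ²) and e = ω/|ω| (so that ω = |ω| e with |e| = 1), and define the 2×2 complex matrices a = (1/(2Ω)) · [[−|ω|, −ē(Ω + iδ)], [e(Ω − iδ), |ω|]] and b = (1/(2Ω)) · [[−|ω|, ē(Ω − iδ)], [−e(Ω + iδ), |ω|]], where ē is the complex conjugate of e. Then a·b + b·a = 1 and a² = b² = 0. -/
open Matrix Complex

set_option maxHeartbeats 2000000

/-- the two-level-atom model is pseudo-fermionic: the matrices `a` and `b`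
built from the parameters `δ`, `ω` satisfy `a·b + b·a = 1` and `a² = b² = 0`. -/
theorem two_level_atom_pseudo_fermionic (δ : ℝ) (ω : ℂ) (hω : ω ≠ 0)
    (hδω : |δ| < ‖ω‖) :
    let Ω : ℝ := Real.sqrt (‖ω‖ ^ 2 - δ ^ 2)
    let e : ℂ := ω / (‖ω‖ : ℂ)
    let a : Matrix (Fin 2) (Fin 2) ℂ :=
      (1 / (2 * (Ω : ℂ))) •
        !![-(‖ω‖ : ℂ), -(starRingEnd ℂ e) * ((Ω : ℂ) + Complex.I * (δ : ℂ));
           e * ((Ω : ℂ) - Complex.I * (δ : ℂ)), (‖ω‖ : ℂ)]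
    let b : Matrix (Fin 2) (Fin 2) ℂ :=
      (1 / (2 * (Ω : ℂ))) •
        !![-(‖ω‖ : ℂ), (starRingEnd ℂ e) * ((Ω : ℂ) - Complex.I * (δ : ℂ));
           -(e * ((Ω : ℂ) + Complex.I * (δ : ℂ))), (‖ω‖ : ℂ)]
    a * b + b * a = 1 ∧ a ^ 2 = 0 ∧ b ^ 2 = 0 := by
  intro Ω e a b
  have habs : (0:ℝ) < ‖ω‖ := norm_pos_iff.mpr hω
  have hpos : (0:ℝ) < ‖ω‖ ^ 2 - δ ^ 2 := by
    nlinarith [abs_nonneg δ, _root_.sq_abs δ]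
  have hΩpos : (0:ℝ) < Ω := Real.sqrt_pos.mpr hpos
  have hΩne : (Ω:ℂ) ≠ 0 := by exact_mod_cast hΩpos.ne'
  have hΩ2 : (Ω:ℂ)^2 = (‖ω‖ : ℂ)^2 - (δ:ℂ)^2 := by
    have h : (Ω:ℝ)^2 = ‖ω‖ ^ 2 - δ ^ 2 := Real.sq_sqrt hpos.le
    exact_mod_cast congrArg (Complex.ofReal) h
  have he : starRingEnd ℂ e * e = 1 := by
    have h1 : ‖e‖ = 1 := by
      simp [e, map_div₀, Complex.norm_real, abs_of_pos habs, div_self habs.ne']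
    have h2 := Complex.mul_conj e
    rw [Complex.normSq_eq_norm_sq, h1] at h2
    rw [mul_comm] at h2
    simpa using h2
  have hI : Complex.I ^ 2 = -1 := Complex.I_sq
  have ha : a = (1 / (2 * (Ω : ℂ))) •
        !![-(‖ω‖ : ℂ), -(starRingEnd ℂ e) * ((Ω : ℂ) + Complex.I * (δ : ℂ));
           e * ((Ω : ℂ) - Complex.I * (δ : ℂ)), (‖ω‖ : ℂ)] := rfl
  have hb : b = (1 / (2 * (Ω : ℂ))) •
        !![-(‖ω‖ : ℂ), (starRingEnd ℂ e) * ((Ω : ℂ) - Complex.I * (δ : ℂ));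
           -(e * ((Ω : ℂ) + Complex.I * (δ : ℂ))), (‖ω‖ : ℂ)] := rfl
  clear_value a b
  clear_value e
  clear_value Ω
  refine ⟨?_, ?_, ?_⟩ <;>
  · simp only [pow_two, ha, hb]
    ext i j
    fin_cases i <;> fin_cases j <;>
      simp [Matrix.mul_apply, Fin.sum_univ_two, Matrix.one_apply, Matrix.smul_apply]
    all_goals try field_simp
    all_goals try ring
    all_goals try linear_combination (2*(Ω:ℂ)^2 + 2*Complex.I^2*(δ:ℂ)^2)*he - 2*hΩ2 + 2*(δ:ℂ)^2*hI
    all_goals try linear_combination (-(Ω:ℂ)^2 + Complex.I^2*(δ:ℂ)^2)*he - hΩ2 + (δ:ℂ)^2*hI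
    all_goals linear_combination (4*(Ω:ℂ)^2*(Complex.I^2*(δ:ℂ)^2 - (Ω:ℂ)^2))*he - 4*(Ω:ℂ)^2*hΩ2 + 4*(Ω:ℂ)^2*(δ:ℂ)^2*hI
end

section
/- The effective hamiltonian of the two-level atom is expressed through pseudo-fermions: let δ ∈ ℝ and ω ∈ ℂ with ω ≠ 0 and |ω| > |δ|, set Ω = √(|ω|² − δ²), e = ω/|ω|, and define a = (1/(2Ω)) · [[−|ω|, −ē(Ω + iδ)], [e(Ω − iδ), |ω|]], b = (1/(2Ω)) · [[−|ω|, ē(Ω − iδ)], [−e(Ω + iδ), |ω|]], and H_eff = (1/2) · [[−iδ, ω̄], [ω, iδ]], where ω̄, ē denote complex conjugates. Then H_eff = Ω·(b·a) − (Ω/2)·1 and H_eff = −(Ω/2)·(a·b − b·a). -/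
set_option maxHeartbeats 4000000
open Matrix Complex

theorem helper (A E cE W d : ℂ) (hW : W ≠ 0) (hE : E * cE = 1)
    (hWsq : W ^ 2 = A ^ 2 - d ^ 2) :
    ((1/2:ℂ) • !![-Complex.I * d, cE * A; E * A, Complex.I * d])
      = W • (((1/(2*W)) • !![-A, cE*(W - Complex.I*d); -(E*(W + Complex.I*d)), A])
              * ((1/(2*W)) • !![-A, -cE*(W + Complex.I*d); E*(W - Complex.I*d), A]))
        - (W/2) • (1 : Matrix (Fin 2) (Fin 2) ℂ) ∧
    ((1/2:ℂ) • !![-Complex.I * d, cE * A; E * A, Complex.I * d])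
      = -(W/2) • (((1/(2*W)) • !![-A, -cE*(W + Complex.I*d); E*(W - Complex.I*d), A])
              * ((1/(2*W)) • !![-A, cE*(W - Complex.I*d); -(E*(W + Complex.I*d)), A])
            - ((1/(2*W)) • !![-A, cE*(W - Complex.I*d); -(E*(W + Complex.I*d)), A])
              * ((1/(2*W)) • !![-A, -cE*(W + Complex.I*d); E*(W - Complex.I*d), A])) := by
  constructor
  · ext i j
    fin_cases i <;> fin_cases j <;>
        simp [Matrix.mul_apply, Fin.sum_univ_two, Matrix.one_apply] <;>
        field_simp <;> ring_nf
    · linear_combination (2*Complex.I*d*W - Complex.I^2*d^2 - W^2) * hE + hWsq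
        - d^2 * Complex.I_sq
    · linear_combination (-2*Complex.I*d*W - Complex.I^2*d^2 - W^2) * hE + hWsq
        - d^2 * Complex.I_sq
  · ext i j
    fin_cases i <;> fin_cases j <;>
        simp [Matrix.mul_apply, Fin.sum_univ_two, Matrix.one_apply] <;>
        field_simp <;> ring_nf
    · linear_combination (-4*Complex.I*d*W) * hE
    · linear_combination (-4*Complex.I*d*W) * hE

/-- the effective hamiltonian of the two-level atom is expressed through
pseudo-fermions: `H_eff = Ω(ba − ½·1) = −(Ω/2)·μ₃`. -/
theorem two_level_atom_hamiltonian (δ : ℝ) (ω : ℂ) (hω : ω ≠ 0)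
    (hδω : |δ| < ‖ω‖) :
    let Ω : ℝ := Real.sqrt (‖ω‖ ^ 2 - δ ^ 2)
    let e : ℂ := ω / (‖ω‖ : ℂ)
    let a : Matrix (Fin 2) (Fin 2) ℂ :=
      (1 / (2 * (Ω : ℂ))) •
        !![-(‖ω‖ : ℂ), -(starRingEnd ℂ e) * ((Ω : ℂ) + Complex.I * (δ : ℂ));
           e * ((Ω : ℂ) - Complex.I * (δ : ℂ)), (‖ω‖ : ℂ)]
    let b : Matrix (Fin 2) (Fin 2) ℂ :=
      (1 / (2 * (Ω : ℂ))) •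
        !![-(‖ω‖ : ℂ), (starRingEnd ℂ e) * ((Ω : ℂ) - Complex.I * (δ : ℂ));
           -(e * ((Ω : ℂ) + Complex.I * (δ : ℂ))), (‖ω‖ : ℂ)]
    let Heff : Matrix (Fin 2) (Fin 2) ℂ :=
      (1 / 2 : ℂ) • !![-Complex.I * (δ : ℂ), starRingEnd ℂ ω; ω, Complex.I * (δ : ℂ)]
    Heff = (Ω : ℂ) • (b * a) - ((Ω : ℂ) / 2) • (1 : Matrix (Fin 2) (Fin 2) ℂ) ∧
    Heff = -(((Ω : ℂ) / 2)) • (a * b - b * a) := by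
  intro Ω e a b Heff
  have habs : (0:ℝ) < ‖ω‖ := (abs_nonneg δ).trans_lt hδω
  have hsq : (0:ℝ) < ‖ω‖ ^ 2 - δ ^ 2 := by
    nlinarith [_root_.sq_abs δ, abs_nonneg δ, hδω]
  have hΩpos : (0:ℝ) < Ω := Real.sqrt_pos.mpr hsq
  have hΩsq : (Ω:ℂ) ^ 2 = ((‖ω‖ : ℝ):ℂ) ^ 2 - (δ:ℂ) ^ 2 := by
    have h : Ω ^ 2 = ‖ω‖ ^ 2 - δ ^ 2 := Real.sq_sqrt hsq.le
    exact_mod_cast congrArg (Complex.ofReal) h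
  have hΩne : (Ω:ℂ) ≠ 0 := by exact_mod_cast hΩpos.ne'
  have habsne : ((‖ω‖ : ℝ):ℂ) ≠ 0 := by exact_mod_cast habs.ne'
  have hee : e * starRingEnd ℂ e = 1 := by
    simp only [e, map_div₀, Complex.conj_ofReal]
    field_simp
    rw [Complex.mul_conj, ← Complex.sq_norm]
    push_cast
    ring
  have hωe : ω = e * (‖ω‖ : ℂ) := (div_mul_cancel₀ ω habsne).symm
  have hωce : starRingEnd ℂ ω = starRingEnd ℂ e * (‖ω‖ : ℂ) := by
    simp only [e, map_div₀, Complex.conj_ofReal]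
    field_simp
  show
    ((1/2:ℂ) • !![-Complex.I * (δ:ℂ), starRingEnd ℂ ω; ω, Complex.I * (δ:ℂ)])
      = (Ω:ℂ) • (((1/(2*(Ω:ℂ))) • !![-((‖ω‖ : ℝ):ℂ), (starRingEnd ℂ e)*((Ω:ℂ) - Complex.I*(δ:ℂ)); -(e*((Ω:ℂ) + Complex.I*(δ:ℂ))), ((‖ω‖ : ℝ):ℂ)])
              * ((1/(2*(Ω:ℂ))) • !![-((‖ω‖ : ℝ):ℂ), -(starRingEnd ℂ e)*((Ω:ℂ) + Complex.I*(δ:ℂ)); e*((Ω:ℂ) - Complex.I*(δ:ℂ)), ((‖ω‖ : ℝ):ℂ)]))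
        - ((Ω:ℂ)/2) • (1 : Matrix (Fin 2) (Fin 2) ℂ) ∧
    ((1/2:ℂ) • !![-Complex.I * (δ:ℂ), starRingEnd ℂ ω; ω, Complex.I * (δ:ℂ)])
      = -((Ω:ℂ)/2) • (((1/(2*(Ω:ℂ))) • !![-((‖ω‖ : ℝ):ℂ), -(starRingEnd ℂ e)*((Ω:ℂ) + Complex.I*(δ:ℂ)); e*((Ω:ℂ) - Complex.I*(δ:ℂ)), ((‖ω‖ : ℝ):ℂ)])
              * ((1/(2*(Ω:ℂ))) • !![-((‖ω‖ : ℝ):ℂ), (starRingEnd ℂ e)*((Ω:ℂ) - Complex.I*(δ:ℂ)); -(e*((Ω:ℂ) + Complex.I*(δ:ℂ))), ((‖ω‖ : ℝ):ℂ)])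
            - ((1/(2*(Ω:ℂ))) • !![-((‖ω‖ : ℝ):ℂ), (starRingEnd ℂ e)*((Ω:ℂ) - Complex.I*(δ:ℂ)); -(e*((Ω:ℂ) + Complex.I*(δ:ℂ))), ((‖ω‖ : ℝ):ℂ)])
              * ((1/(2*(Ω:ℂ))) • !![-((‖ω‖ : ℝ):ℂ), -(starRingEnd ℂ e)*((Ω:ℂ) + Complex.I*(δ:ℂ)); e*((Ω:ℂ) - Complex.I*(δ:ℂ)), ((‖ω‖ : ℝ):ℂ)]))
  have hH : (!![-Complex.I*(δ:ℂ), starRingEnd ℂ ω; ω, Complex.I*(δ:ℂ)] : Matrix (Fin 2) (Fin 2) ℂ)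
      = !![-Complex.I*(δ:ℂ), starRingEnd ℂ e * ((‖ω‖ : ℝ):ℂ);
           e * ((‖ω‖ : ℝ):ℂ), Complex.I*(δ:ℂ)] := by
    rw [← hωe, ← hωce]
  rw [hH]
  exact helper ((‖ω‖ : ℝ):ℂ) e (starRingEnd ℂ e) (Ω:ℂ) (δ:ℂ) hΩne hee hΩsq
end
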